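/- Let ζ¹, w^a, w^c ∈ ℝ² be three non-collinear points, and let Ψ : [ζ¹, w^a] → [ζ¹, w^c] be a bi-Lipschitz bijection between the two segments with Ψ(ζ¹) = ζ¹ and Ψ(w^a) = w^c, which is monotone along the segments (i.e., if S lies between ζ¹ and Q on [ζ¹, w^a] then Ψ(S) lies between ζ¹ and Ψ(Q)). Then the family of segments {[Q, Ψ(Q)] : Q ∈ [ζ¹, w^a]} covers the closed triangle with vertices ζ¹, w^a, w^c, and any two distinct such segments intersect at most in ζ¹. -/

import Mathlib

open Set

/-- Foliation of a triangle by the segments `[Q, Ψ(Q)]`, where `Ψ` is a monotone bi-Lipschitz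
bijection between the sides `[ζ, wa]` and `[ζ, wc]` fixing `ζ` and sending `wa` to `wc`:
the segments cover the triangle with vertices `ζ, wa, wc`, and two distinct such segments
intersect at most in `ζ`. -/
theorem stmt_10 (ζ wa wc : ℂ)
    (hncol : ¬ Collinear ℝ ({ζ, wa, wc} : Set ℂ))
    (Ψ : ℂ → ℂ)
    (hbij : Set.BijOn Ψ (segment ℝ ζ wa) (segment ℝ ζ wc))
    (hζ : Ψ ζ = ζ) (hwa : Ψ wa = wc)
    (K : NNReal) (hlip : LipschitzOnWith K Ψ (segment ℝ ζ wa))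
    (K' : ℝ) (hK' : 0 < K')
    (hlip' : ∀ x ∈ segment ℝ ζ wa, ∀ y ∈ segment ℝ ζ wa, ‖x - y‖ ≤ K' * ‖Ψ x - Ψ y‖)
    -- monotonicity: if `S` lies between `ζ` and `Q`, then `Ψ S` lies between `ζ` and `Ψ Q`
    (hmono : ∀ Q ∈ segment ℝ ζ wa, ∀ S ∈ segment ℝ ζ wa,
      S ∈ segment ℝ ζ Q → Ψ S ∈ segment ℝ ζ (Ψ Q)) :
    (∀ R ∈ convexHull ℝ ({ζ, wa, wc} : Set ℂ),
      ∃ Q ∈ segment ℝ ζ wa, R ∈ segment ℝ Q (Ψ Q)) ∧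
    (∀ Q ∈ segment ℝ ζ wa, ∀ S ∈ segment ℝ ζ wa, Q ≠ S →
      segment ℝ Q (Ψ Q) ∩ segment ℝ S (Ψ S) ⊆ {ζ}) := by
  -- linear independence of wa - ζ, wc - ζ
  have hli : ∀ a b : ℝ, a • (wa - ζ) + b • (wc - ζ) = 0 → a = 0 ∧ b = 0 := by
    intro a b hab
    by_contra h
    apply hncol
    rw [collinear_iff_of_mem (show ζ ∈ ({ζ, wa, wc} : Set ℂ) by simp)]
    rcases (not_and_or.mp h) with ha | hb
    · refine ⟨wc - ζ, ?_⟩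
      intro p hp
      rcases hp with rfl | rfl | rfl
      · exact ⟨0, by simp⟩
      · refine ⟨a⁻¹ * (-b), ?_⟩
        have h2 : a • (p - ζ) = (-b) • (wc - ζ) := by
          linear_combination (norm := module) hab
        have h3 := congrArg (fun z => a⁻¹ • z) h2
        simp only [smul_smul, inv_mul_cancel₀ ha, one_smul] at h3
        simp only [vadd_eq_add]
        rw [← h3]; ring
      · exact ⟨1, by simp⟩
    · refine ⟨wa - ζ, ?_⟩
      intro p hp
      rcases hp with rfl | rfl | rfl
      · exact ⟨0, by simp⟩
      · exact ⟨1, by simp⟩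
      · refine ⟨b⁻¹ * (-a), ?_⟩
        have h2 : b • (p - ζ) = (-a) • (wa - ζ) := by
          linear_combination (norm := module) hab
        have h3 := congrArg (fun z => b⁻¹ • z) h2
        simp only [smul_smul, inv_mul_cancel₀ hb, one_smul] at h3
        simp only [vadd_eq_add]
        rw [← h3]; ring
  have hwane : wa - ζ ≠ 0 := by
    intro h; exact one_ne_zero ((hli 1 0 (by rw [h]; simp)).1)
  have hwcne : wc - ζ ≠ 0 := by
    intro h; exact one_ne_zero ((hli 0 1 (by rw [h]; simp)).2)
  -- cancellation lemmas
  have hcanc : ∀ a b : ℝ, a • (wc - ζ) = b • (wc - ζ) → a = b := by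
    intro a b h
    have : (a - b) • (wc - ζ) = 0 := by rw [sub_smul, h]; simp
    rcases smul_eq_zero.mp this with h' | h'
    · linarith [sub_eq_zero.mp (by exact_mod_cast h')]
    · exact absurd h' hwcne
  have hcanca : ∀ a b : ℝ, a • (wa - ζ) = b • (wa - ζ) → a = b := by
    intro a b h
    have : (a - b) • (wa - ζ) = 0 := by rw [sub_smul, h]; simp
    rcases smul_eq_zero.mp this with h' | h'
    · linarith [sub_eq_zero.mp (by exact_mod_cast h')]
    · exact absurd h' hwane
  -- membership
  have hmema : ∀ t ∈ Icc (0:ℝ) 1, ζ + t • (wa - ζ) ∈ segment ℝ ζ wa := by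
    intro t ht; rw [segment_eq_image']; exact ⟨t, ht, rfl⟩
  have hmemc : ∀ t ∈ Icc (0:ℝ) 1, ζ + t • (wc - ζ) ∈ segment ℝ ζ wc := by
    intro t ht; rw [segment_eq_image']; exact ⟨t, ht, rfl⟩
  -- the scalar function f
  set f : ℝ → ℝ := fun t => ((Ψ (ζ + t • (wa - ζ)) - ζ) / (wc - ζ)).re with hf_def
  have hf : ∀ t ∈ Icc (0:ℝ) 1,
      Ψ (ζ + t • (wa - ζ)) = ζ + (f t) • (wc - ζ) ∧ f t ∈ Icc (0:ℝ) 1 := by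
    intro t ht
    have hQ : ζ + t • (wa - ζ) ∈ segment ℝ ζ wa := hmema t ht
    have hΨQ : Ψ (ζ + t • (wa - ζ)) ∈ segment ℝ ζ wc := hbij.mapsTo hQ
    rw [segment_eq_image'] at hΨQ
    obtain ⟨u, hu, huΨ⟩ := hΨQ
    have hfu : f t = u := by
      rw [hf_def]
      simp only [← huΨ]
      rw [add_sub_cancel_left, Complex.real_smul, mul_div_assoc,
        div_self hwcne, mul_one, Complex.ofReal_re]
    rw [hfu]
    exact ⟨by rw [← huΨ], hu⟩
  have hf0 : f 0 = 0 := by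
    rw [hf_def]; simp [hζ]
  have hf1 : f 1 = 1 := by
    rw [hf_def]; simp only [one_smul, add_sub_cancel]
    rw [hwa, div_self hwcne]; simp
  -- monotonicity of f
  have hfmono : ∀ q ∈ Icc (0:ℝ) 1, ∀ s ∈ Icc (0:ℝ) 1, q ≤ s → f q ≤ f s := by
    intro q hq s hs hqs
    obtain ⟨hΨq, hfq⟩ := hf q hq
    obtain ⟨hΨs, hfs⟩ := hf s hs
    have hseg : ζ + q • (wa - ζ) ∈ segment ℝ ζ (ζ + s • (wa - ζ)) := by
      rw [segment_eq_image']
      rcases eq_or_lt_of_le hs.1 with h0 | h0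
      · have hq0 : q = 0 := le_antisymm (h0 ▸ hqs) hq.1
        exact ⟨0, ⟨le_refl 0, zero_le_one⟩, by simp [hq0]⟩
      · refine ⟨q / s, ⟨div_nonneg hq.1 h0.le, by rw [div_le_one h0]; exact hqs⟩, ?_⟩
        show ζ + (q / s) • (ζ + s • (wa - ζ) - ζ) = ζ + q • (wa - ζ)
        rw [add_sub_cancel_left, smul_smul, div_mul_cancel₀ _ (ne_of_gt h0)]
    have := hmono _ (hmema s hs) _ (hmema q hq) hseg
    rw [hΨq, hΨs, segment_eq_image'] at this
    obtain ⟨θ, hθ, hθe⟩ := this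
    simp only at hθe
    have : θ * f s = f q := hcanc _ _ (by
      rw [← smul_smul]; linear_combination (norm := module) hθe)
    nlinarith [hθ.1, hθ.2, hfs.1]
  -- injectivity hence strict monotonicity
  have hfstrict : ∀ q ∈ Icc (0:ℝ) 1, ∀ s ∈ Icc (0:ℝ) 1, q < s → f q < f s := by
    intro q hq s hs hqs
    rcases lt_or_eq_of_le (hfmono q hq s hs hqs.le) with h | h
    · exact h
    · exfalso
      have hΨq := (hf q hq).1
      have hΨs := (hf s hs).1
      have : Ψ (ζ + q • (wa - ζ)) = Ψ (ζ + s • (wa - ζ)) := by rw [hΨq, hΨs, h]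
      have := hbij.injOn (hmema q hq) (hmema s hs) this
      have : q • (wa - ζ) = s • (wa - ζ) := by
        have := this; linear_combination (norm := module) this
      exact absurd (hcanca _ _ this) (ne_of_lt hqs)
  -- continuity of f on [0,1]
  have hcont : ContinuousOn f (Icc (0:ℝ) 1) := by
    have h1 : ContinuousOn (fun t : ℝ => Ψ (ζ + t • (wa - ζ))) (Icc 0 1) := by
      apply hlip.continuousOn.comp
      · exact (continuous_const.add (continuous_id.smul continuous_const)).continuousOn
      · intro t ht; exact hmema t ht
    exact (Complex.continuous_re.comp_continuousOn
      ((h1.sub continuousOn_const).div_const _))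
  -- surjectivity of f
  have hsurj : ∀ γ ∈ Icc (0:ℝ) 1, ∃ t ∈ Icc (0:ℝ) 1, f t = γ := by
    intro γ hγ
    obtain ⟨Q, hQ, hΨQ⟩ := hbij.surjOn (hmemc γ hγ)
    rw [segment_eq_image'] at hQ
    obtain ⟨t, ht, rfl⟩ := hQ
    refine ⟨t, ht, ?_⟩
    have := (hf t ht).1
    rw [this] at hΨQ
    exact hcanc _ _ (by linear_combination (norm := module) hΨQ)
  -- solvability of the coordinate system
  have hkey : ∀ β γ : ℝ, 0 ≤ β → 0 ≤ γ → β + γ ≤ 1 →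
      ∃ t ∈ Icc (0:ℝ) 1, ∃ s ∈ Icc (0:ℝ) 1, (1-s)*t = β ∧ s * f t = γ := by
    intro β γ hβ hγ hβγ
    rcases eq_or_lt_of_le hγ with hγ0 | hγ0
    · exact ⟨β, ⟨hβ, by linarith⟩, 0, ⟨le_refl 0, zero_le_one⟩, by ring,
        by rw [← hγ0]; ring⟩
    rcases eq_or_lt_of_le hβ with hβ0 | hβ0
    · obtain ⟨t, ht, hft⟩ := hsurj γ ⟨hγ, by linarith⟩
      exact ⟨t, ht, 1, ⟨zero_le_one, le_refl 1⟩, by rw [← hβ0]; ring,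
        by rw [hft]; ring⟩
    · set φ : ℝ → ℝ := fun t => (t - β) * f t - γ * t with hφdef
      have hβ1 : β ≤ 1 := by linarith
      have hφc : ContinuousOn φ (Icc β 1) := by
        apply ContinuousOn.sub
        · exact ((continuous_id.sub continuous_const).continuousOn).mul
            (hcont.mono (Icc_subset_Icc hβ le_rfl))
        · exact (continuous_const.mul continuous_id).continuousOn
      have h0mem : (0:ℝ) ∈ Icc (φ β) (φ 1) := by
        constructor
        · show (β - β) * f β - γ * β ≤ 0
          nlinarith
        · show (0:ℝ) ≤ (1 - β) * f 1 - γ * 1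
          rw [hf1]; nlinarith
      obtain ⟨t, htmem, hφt⟩ := intermediate_value_Icc hβ1 hφc h0mem
      have hφt' : (t - β) * f t - γ * t = 0 := hφt
      have ht01 : t ∈ Icc (0:ℝ) 1 := ⟨le_trans hβ htmem.1, htmem.2⟩
      have htpos : 0 < t := lt_of_lt_of_le hβ0 htmem.1
      refine ⟨t, ht01, 1 - β / t, ⟨?_, ?_⟩, ?_, ?_⟩
      · have : β / t ≤ 1 := (div_le_one htpos).mpr htmem.1
        linarith
      · have : 0 ≤ β / t := div_nonneg hβ htpos.le
        linarith
      · field_simp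
        ring
      · have ht' : t ≠ 0 := ne_of_gt htpos
        field_simp
        nlinarith [hφt']
  refine ⟨?_, ?_⟩
  · -- covering
    intro R hR
    rw [show ({ζ, wa, wc} : Set ℂ) = insert ζ {wa, wc} from rfl,
      convexHull_insert ⟨wa, by simp⟩, mem_convexJoin] at hR
    obtain ⟨z, hz, y, hy, hRseg⟩ := hR
    rw [mem_singleton_iff] at hz
    rw [hz] at hRseg
    rw [convexHull_pair, segment_eq_image'] at hy
    obtain ⟨c, hc, rfl⟩ := hy
    rw [segment_eq_image'] at hRseg
    obtain ⟨m, hm, hmR⟩ := hRseg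
    simp only at hmR
    have hRrep : R = ζ + (m*(1-c)) • (wa - ζ) + (m*c) • (wc - ζ) := by
      rw [← hmR]; module
    obtain ⟨t, ht, s, hs, he1, he2⟩ := hkey (m*(1-c)) (m*c)
      (by nlinarith [hm.1, hm.2, hc.1, hc.2]) (by nlinarith [hm.1, hc.1])
      (by nlinarith [hm.1, hm.2, hc.1, hc.2])
    refine ⟨ζ + t • (wa - ζ), hmema t ht, ?_⟩
    rw [segment_eq_image']
    refine ⟨s, hs, ?_⟩
    show ζ + t • (wa - ζ) + s • (Ψ (ζ + t • (wa - ζ)) - (ζ + t • (wa - ζ))) = R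
    rw [(hf t ht).1, hRrep, ← he1, ← he2]
    module
  · -- disjointness
    have hkey2 : ∀ q ∈ Icc (0:ℝ) 1, ∀ s ∈ Icc (0:ℝ) 1, q < s →
        ∀ u ∈ Icc (0:ℝ) 1, ∀ v ∈ Icc (0:ℝ) 1,
        (1-u)*q = (1-v)*s → u * f q = v * f s → False := by
      intro q hq s hs hqs u hu v hv h1 h2
      have hfqs : f q < f s := hfstrict q hq s hs hqs
      have hfq0 : 0 ≤ f q := (hf q hq).2.1
      have hfs0 : 0 < f s := lt_of_le_of_lt hfq0 hfqs
      have hspos : 0 < s := lt_of_le_of_lt hq.1 hqs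
      rcases eq_or_lt_of_le (mul_nonneg hu.1 hfq0) with hγ | hγ
      · have hv0 : v = 0 := by
          have h2' : v * f s = 0 := by rw [← h2, ← hγ]
          rcases mul_eq_zero.mp h2'.symm.symm with h' | h'
          · exact h'
          · exact absurd h' (ne_of_gt hfs0)
        rw [hv0] at h1
        nlinarith [hq.1, hu.1, hu.2]
      · have hfqpos : 0 < f q := by nlinarith [hu.2]
        have hupos : 0 < u := by nlinarith
        have hvpos : 0 < v := by nlinarith
        have huv : v < u := by nlinarith
        have hqpos : 0 < q := by
          rcases eq_or_lt_of_le hq.1 with h | h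
          · exfalso; rw [← h, hf0] at hfqpos; exact lt_irrefl 0 hfqpos
          · exact h
        rcases eq_or_lt_of_le hu.2 with hu1 | hu1
        · have hβ0 : (1-v)*s = 0 := by rw [← h1, ← hu1]; ring
          have hv1 : v = 1 := by
            rcases mul_eq_zero.mp hβ0 with h' | h'
            · linarith
            · exact absurd h' (ne_of_gt hspos)
          rw [hv1, ← hu1] at h2
          simp at h2
          linarith
        · nlinarith
    intro Q hQ S hS hQS R hRmem
    obtain ⟨hRQ, hRS⟩ := hRmem
    rw [segment_eq_image'] at hQ hS
    obtain ⟨q, hq, rfl⟩ := hQ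
    obtain ⟨s, hs, rfl⟩ := hS
    rw [(hf q hq).1, segment_eq_image'] at hRQ
    rw [(hf s hs).1, segment_eq_image'] at hRS
    obtain ⟨u, hu, huR⟩ := hRQ
    obtain ⟨v, hv, hvR⟩ := hRS
    simp only at huR hvR
    have hRrepQ : R = ζ + ((1-u)*q) • (wa - ζ) + (u * f q) • (wc - ζ) := by
      rw [← huR]; module
    have hRrepS : R = ζ + ((1-v)*s) • (wa - ζ) + (v * f s) • (wc - ζ) := by
      rw [← hvR]; module
    have hcoef := hli ((1-u)*q - (1-v)*s) (u * f q - v * f s)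
      (by linear_combination (norm := module) hRrepQ.symm.trans hRrepS)
    have h1 : (1-u)*q = (1-v)*s := by linarith [hcoef.1]
    have h2 : u * f q = v * f s := by linarith [hcoef.2]
    rcases lt_trichotomy q s with h | h | h
    · exact absurd (hkey2 q hq s hs h u hu v hv h1 h2) (fun x => x)
    · exact absurd (by rw [h]) hQS
    · exact absurd (hkey2 s hs q hq h v hv u hu h1.symm h2.symm) (fun x => x)
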